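/- Let X be a compact ordered space and let Y ⊆ X be a closed subset, endowed with the subspace topology and the restricted order. Then every continuous monotone function f : Y → [0,1] extends to a continuous monotone function F : X → [0,1], i.e. F z = f z for every z ∈ Y. -/

import Mathlib

open Set Filter Topology

section NachbinAux

variable {X : Type*} [TopologicalSpace X] [CompactSpace X] [PartialOrder X]
  [OrderClosedTopology X]

lemma nachbin_isClosed_upClosure {s : Set X} (hs : IsClosed s) :
    IsClosed {x | ∃ a ∈ s, a ≤ x} := by
  have hcp : IsCompact ({p : X × X | p.1 ≤ p.2} ∩ s ×ˢ univ) :=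
    ((isClosed_le continuous_fst continuous_snd).inter (hs.prod isClosed_univ)).isCompact
  have h : {x | ∃ a ∈ s, a ≤ x} = Prod.snd '' ({p : X × X | p.1 ≤ p.2} ∩ s ×ˢ univ) := by
    ext x
    constructor
    · rintro ⟨a, ha, hax⟩; exact ⟨(a, x), ⟨hax, ha, trivial⟩, rfl⟩
    · rintro ⟨⟨a, b⟩, ⟨hab, ha, -⟩, rfl⟩; exact ⟨a, ha, hab⟩
  rw [h]
  exact (hcp.image continuous_snd).isClosed

lemma nachbin_isClosed_downClosure {s : Set X} (hs : IsClosed s) :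
    IsClosed {x | ∃ a ∈ s, x ≤ a} := by
  have hcp : IsCompact ({p : X × X | p.1 ≤ p.2} ∩ univ ×ˢ s) :=
    ((isClosed_le continuous_fst continuous_snd).inter (isClosed_univ.prod hs)).isCompact
  have h : {x | ∃ a ∈ s, x ≤ a} = Prod.fst '' ({p : X × X | p.1 ≤ p.2} ∩ univ ×ˢ s) := by
    ext x
    constructor
    · rintro ⟨a, ha, hax⟩; exact ⟨(x, a), ⟨hax, trivial, ha⟩, rfl⟩
    · rintro ⟨⟨a, b⟩, ⟨hab, -, hb⟩, rfl⟩; exact ⟨b, hb, hab⟩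
  rw [h]
  exact (hcp.image continuous_fst).isClosed

/-- Order normality of compact pospaces. -/
lemma nachbin_normality {A B : Set X} (hA : IsClosed A) (hB : IsClosed B)
    (hAu : IsUpperSet A) (hBl : IsLowerSet B) (hd : Disjoint A B) :
    ∃ U V : Set X, IsOpen U ∧ IsOpen V ∧ IsUpperSet U ∧ IsLowerSet V ∧
      A ⊆ U ∧ B ⊆ V ∧ Disjoint U V := by
  have hsub : A ×ˢ B ⊆ {p : X × X | p.1 ≤ p.2}ᶜ := by
    rintro ⟨a, b⟩ ⟨ha, hb⟩ (hab : a ≤ b)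
    exact hd.le_bot ⟨hAu hab ha, hb⟩
  obtain ⟨U, V, hU, hV, hAU, hBV, hUV⟩ :=
    generalized_tube_lemma hA.isCompact hB.isCompact
      (isClosed_le continuous_fst continuous_snd).isOpen_compl hsub
  refine ⟨{x | ∀ z, x ≤ z → z ∈ U}, {x | ∀ z, z ≤ x → z ∈ V}, ?_, ?_, ?_, ?_, ?_, ?_, ?_⟩
  · have h : {x | ∀ z, x ≤ z → z ∈ U} = {x | ∃ a ∈ Uᶜ, x ≤ a}ᶜ := by
      ext x
      constructor
      · rintro h ⟨a, ha, hxa⟩; exact ha (h a hxa)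
      · intro h z hz; by_contra hc; exact h ⟨z, hc, hz⟩
    rw [h]
    exact (nachbin_isClosed_downClosure hU.isClosed_compl).isOpen_compl
  · have h : {x | ∀ z, z ≤ x → z ∈ V} = {x | ∃ a ∈ Vᶜ, a ≤ x}ᶜ := by
      ext x
      constructor
      · rintro h ⟨a, ha, hxa⟩; exact ha (h a hxa)
      · intro h z hz; by_contra hc; exact h ⟨z, hc, hz⟩
    rw [h]
    exact (nachbin_isClosed_upClosure hV.isClosed_compl).isOpen_compl
  · intro a b hab ha z hz; exact ha z (hab.trans hz)
  · intro a b hab ha z hz; exact ha z (hz.trans hab)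
  · intro a ha z hz; exact hAU (hAu hz ha)
  · intro b hb z hz; exact hBV (hBl hz hb)
  · rw [Set.disjoint_left]
    rintro x hxU hxV
    exact hUV (Set.mk_mem_prod (hxU x le_rfl) (hxV x le_rfl)) (le_refl x)

/-- Insertion lemma. -/
lemma nachbin_insertion {C U : Set X} (hC : IsClosed C) (hU : IsOpen U) (hUu : IsUpperSet U)
    (hCU : C ⊆ U) : ∃ V, IsOpen V ∧ IsUpperSet V ∧ C ⊆ V ∧ closure V ⊆ U := by
  obtain ⟨W, V, hW, hV, hWu, hVl, hAW, hBV, hdWV⟩ :=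
    nachbin_normality (A := {x | ∃ a ∈ C, a ≤ x}) (B := Uᶜ)
      (nachbin_isClosed_upClosure hC) hU.isClosed_compl
      (fun a b hab ⟨c, hc, hca⟩ => ⟨c, hc, hca.trans hab⟩)
      (fun a b hab ha hb => ha (hUu hab hb))
      (Set.disjoint_left.mpr (fun x ⟨a, haC, hax⟩ hx => hx (hUu hax (hCU haC))))
  refine ⟨W, hW, hWu, fun c hc => hAW ⟨c, hc, le_rfl⟩, ?_⟩
  have h1 : closure W ⊆ Vᶜ :=
    closure_minimal (fun x hx hxV => Set.disjoint_left.mp hdWV hx hxV) hV.isClosed_compl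
  intro x hx
  by_contra hxU
  exact h1 hx (hBV hxU)

end NachbinAux

namespace NachbinProof

open Set Filter Topology

variable {X : Type*} [TopologicalSpace X] [CompactSpace X] [PartialOrder X]
  [OrderClosedTopology X]

/-- Ordered analogue of `Urysohns.CU`: a closed set `C` inside an open upper set `U`. -/
structure OCU (X : Type*) [TopologicalSpace X] [PartialOrder X] where
  protected C : Set X
  protected U : Set X
  protected closed_C : IsClosed C
  protected open_U : IsOpen U
  protected upper_U : IsUpperSet U
  protected subset : C ⊆ U

namespace OCU

/-- Choice of an inserted open upper set. -/
noncomputable def ins (c : OCU X) :=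
  nachbin_insertion c.closed_C c.open_U c.upper_U c.subset

noncomputable def left (c : OCU X) : OCU X where
  C := c.C
  U := c.ins.choose
  closed_C := c.closed_C
  open_U := c.ins.choose_spec.1
  upper_U := c.ins.choose_spec.2.1
  subset := c.ins.choose_spec.2.2.1

noncomputable def right (c : OCU X) : OCU X where
  C := closure c.ins.choose
  U := c.U
  closed_C := isClosed_closure
  open_U := c.open_U
  upper_U := c.upper_U
  subset := c.ins.choose_spec.2.2.2

@[simp] theorem right_U (c : OCU X) : c.right.U = c.U := rfl

theorem left_U_subset_right_C (c : OCU X) : c.left.U ⊆ c.right.C :=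
  subset_closure

theorem left_U_subset (c : OCU X) : c.left.U ⊆ c.U :=
  Subset.trans c.left_U_subset_right_C c.right.subset

theorem subset_right_C (c : OCU X) : c.C ⊆ c.right.C :=
  Subset.trans c.left.subset c.left_U_subset_right_C

noncomputable def approx : ℕ → OCU X → X → ℝ
  | 0, c, x => indicator c.Uᶜ 1 x
  | n + 1, c, x => midpoint ℝ (approx n c.left x) (approx n c.right x)

theorem approx_of_mem_C (c : OCU X) (n : ℕ) {x : X} (hx : x ∈ c.C) : c.approx n x = 0 := by
  induction n generalizing c with
  | zero => exact indicator_of_notMem (fun (hU : x ∈ c.Uᶜ) => hU <| c.subset hx) _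
  | succ n ihn =>
    simp only [approx]
    rw [ihn, ihn, midpoint_self]
    exacts [c.subset_right_C hx, hx]

theorem approx_of_nmem_U (c : OCU X) (n : ℕ) {x : X} (hx : x ∉ c.U) : c.approx n x = 1 := by
  induction n generalizing c with
  | zero =>
    rw [← mem_compl_iff] at hx
    exact indicator_of_mem hx _
  | succ n ihn =>
    simp only [approx]
    rw [ihn, ihn, midpoint_self]
    exacts [hx, fun hU => hx <| c.left_U_subset hU]

theorem approx_nonneg (c : OCU X) (n : ℕ) (x : X) : 0 ≤ c.approx n x := by
  induction n generalizing c with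
  | zero => exact indicator_nonneg (fun _ _ => zero_le_one) _
  | succ n ihn =>
    simp only [approx, midpoint_eq_smul_add, invOf_eq_inv]
    refine mul_nonneg (inv_nonneg.2 zero_le_two) (add_nonneg ?_ ?_) <;> apply ihn

theorem approx_le_one (c : OCU X) (n : ℕ) (x : X) : c.approx n x ≤ 1 := by
  induction n generalizing c with
  | zero => exact indicator_apply_le' (fun _ => le_rfl) fun _ => zero_le_one
  | succ n ihn =>
    simp only [approx, midpoint_eq_smul_add, invOf_eq_inv, smul_eq_mul, ← div_eq_inv_mul]
    have := add_le_add (ihn (left c)) (ihn (right c))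
    norm_num at this
    exact Iff.mpr (div_le_one zero_lt_two) this

theorem approx_antitone (c : OCU X) (n : ℕ) : Antitone (c.approx n) := by
  induction n generalizing c with
  | zero =>
    intro x y hxy
    by_cases hy : y ∈ c.Uᶜ
    · have hx : x ∈ c.Uᶜ := fun hxU => hy (c.upper_U hxy hxU)
      simp only [approx, indicator_of_mem hx, indicator_of_mem hy, Pi.one_apply, le_refl]
    · calc c.approx 0 y = 0 := indicator_of_notMem hy _
        _ ≤ c.approx 0 x := c.approx_nonneg 0 x
  | succ n ihn =>
    intro x y hxy
    simp only [approx]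
    exact midpoint_le_midpoint (ihn c.left hxy) (ihn c.right hxy)

theorem bddAbove_range_approx (c : OCU X) (x : X) : BddAbove (range fun n => c.approx n x) :=
  ⟨1, fun _ ⟨n, hn⟩ => hn ▸ c.approx_le_one n x⟩

theorem approx_le_approx_of_U_sub_C {c₁ c₂ : OCU X} (h : c₁.U ⊆ c₂.C) (n₁ n₂ : ℕ) (x : X) :
    c₂.approx n₂ x ≤ c₁.approx n₁ x := by
  by_cases hx : x ∈ c₁.U
  · calc
      approx n₂ c₂ x = 0 := approx_of_mem_C _ _ (h hx)
      _ ≤ approx n₁ c₁ x := approx_nonneg _ _ _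
  · calc
      approx n₂ c₂ x ≤ 1 := approx_le_one _ _ _
      _ = approx n₁ c₁ x := (approx_of_nmem_U _ _ hx).symm

theorem approx_mem_Icc_right_left (c : OCU X) (n : ℕ) (x : X) :
    c.approx n x ∈ Icc (c.right.approx n x) (c.left.approx n x) := by
  induction' n with n ihn generalizing c
  · exact ⟨le_rfl, indicator_le_indicator_of_subset (compl_subset_compl.2 c.left_U_subset)
      (fun _ => zero_le_one) _⟩
  · simp only [approx, mem_Icc]
    refine ⟨midpoint_le_midpoint ?_ (ihn _).1, midpoint_le_midpoint (ihn _).2 ?_⟩ <;>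
      apply approx_le_approx_of_U_sub_C
    exacts [subset_closure, subset_closure]

theorem approx_le_succ (c : OCU X) (n : ℕ) (x : X) : c.approx n x ≤ c.approx (n + 1) x := by
  induction' n with n ihn generalizing c
  · have h := (approx_mem_Icc_right_left c 0 x).2
    simp only [approx, right_le_midpoint]
    simpa [approx] using h
  · rw [approx, approx]
    exact midpoint_le_midpoint (ihn _) (ihn _)

theorem approx_mono (c : OCU X) (x : X) : Monotone fun n => c.approx n x :=
  monotone_nat_of_le_succ fun n => c.approx_le_succ n x

protected noncomputable def lim (c : OCU X) (x : X) : ℝ :=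
  ⨆ n, c.approx n x

theorem tendsto_approx_atTop (c : OCU X) (x : X) :
    Tendsto (fun n => c.approx n x) atTop (𝓝 <| c.lim x) :=
  tendsto_atTop_ciSup (c.approx_mono x) ⟨1, fun _ ⟨_, hn⟩ => hn ▸ c.approx_le_one _ _⟩

theorem lim_of_mem_C (c : OCU X) (x : X) (h : x ∈ c.C) : c.lim x = 0 := by
  simp only [OCU.lim, approx_of_mem_C, h, ciSup_const]

theorem lim_of_nmem_U (c : OCU X) (x : X) (h : x ∉ c.U) : c.lim x = 1 := by
  simp only [OCU.lim, approx_of_nmem_U c _ h, ciSup_const]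

theorem lim_eq_midpoint (c : OCU X) (x : X) :
    c.lim x = midpoint ℝ (c.left.lim x) (c.right.lim x) := by
  refine tendsto_nhds_unique (c.tendsto_approx_atTop x) ((tendsto_add_atTop_iff_nat 1).1 ?_)
  simp only [approx]
  exact (c.left.tendsto_approx_atTop x).midpoint (c.right.tendsto_approx_atTop x)

theorem approx_le_lim (c : OCU X) (x : X) (n : ℕ) : c.approx n x ≤ c.lim x :=
  le_ciSup (c.bddAbove_range_approx x) _

theorem lim_nonneg (c : OCU X) (x : X) : 0 ≤ c.lim x :=
  (c.approx_nonneg 0 x).trans (c.approx_le_lim x 0)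

theorem lim_le_one (c : OCU X) (x : X) : c.lim x ≤ 1 :=
  ciSup_le fun _ => c.approx_le_one _ _

theorem lim_mem_Icc (c : OCU X) (x : X) : c.lim x ∈ Icc (0 : ℝ) 1 :=
  ⟨c.lim_nonneg x, c.lim_le_one x⟩

theorem lim_antitone (c : OCU X) : Antitone c.lim := fun x y hxy =>
  ciSup_le fun n => (c.approx_antitone n hxy).trans (c.approx_le_lim x n)

theorem continuous_lim (c : OCU X) : Continuous c.lim := by
  obtain ⟨h0, h1234, h1⟩ : 0 < (2⁻¹ : ℝ) ∧ (2⁻¹ : ℝ) < 3 / 4 ∧ (3 / 4 : ℝ) < 1 := by norm_num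
  refine
    continuous_iff_continuousAt.2 fun x =>
      (Metric.nhds_basis_closedBall_pow (h0.trans h1234) h1).tendsto_right_iff.2 fun n _ => ?_
  simp only [Metric.mem_closedBall]
  induction' n with n ihn generalizing c
  · filter_upwards with y
    rw [pow_zero]
    exact Real.dist_le_of_mem_Icc_01 (c.lim_mem_Icc _) (c.lim_mem_Icc _)
  · by_cases hxl : x ∈ c.left.U
    · filter_upwards [IsOpen.mem_nhds c.left.open_U hxl, ihn c.left] with _ hyl hyd
      rw [pow_succ', c.lim_eq_midpoint, c.lim_eq_midpoint,
        c.right.lim_of_mem_C _ (c.left_U_subset_right_C hyl),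
        c.right.lim_of_mem_C _ (c.left_U_subset_right_C hxl)]
      refine (dist_midpoint_midpoint_le _ _ _ _).trans ?_
      rw [dist_self, add_zero, div_eq_inv_mul]
      gcongr
    · replace hxl : x ∈ c.left.right.Cᶜ :=
        compl_subset_compl.2 c.left.right.subset hxl
      filter_upwards [IsOpen.mem_nhds (isOpen_compl_iff.2 c.left.right.closed_C) hxl,
        ihn c.left.right, ihn c.right] with y hyl hydl hydr
      replace hxl : x ∉ c.left.left.U :=
        compl_subset_compl.2 c.left.left_U_subset_right_C hxl
      replace hyl : y ∉ c.left.left.U :=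
        compl_subset_compl.2 c.left.left_U_subset_right_C hyl
      simp only [pow_succ, c.lim_eq_midpoint, c.left.lim_eq_midpoint,
        c.left.left.lim_of_nmem_U _ hxl, c.left.left.lim_of_nmem_U _ hyl]
      refine (dist_midpoint_midpoint_le _ _ _ _).trans ?_
      refine (div_le_div_of_nonneg_right (add_le_add (dist_midpoint_midpoint_le _ _ _ _) le_rfl)
        zero_le_two).trans ?_
      rw [dist_self, zero_add]
      set r := (3 / 4 : ℝ) ^ n
      calc _ ≤ (r / 2 + r) / 2 := by gcongr
        _ = _ := by field_simp; ring

end OCU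

/-- Monotone Urysohn lemma for compact pospaces. -/
lemma urysohn_mono {A B : Set X} (hA : IsClosed A) (hB : IsClosed B)
    (hAu : IsUpperSet A) (hBl : IsLowerSet B) (hd : Disjoint A B) :
    ∃ g : X → ℝ, Continuous g ∧ Monotone g ∧ (∀ a ∈ A, g a = 1) ∧ (∀ b ∈ B, g b = 0) ∧
      ∀ x, g x ∈ Icc (0 : ℝ) 1 := by
  set c : OCU X :=
    { C := A
      U := Bᶜ
      closed_C := hA
      open_U := hB.isOpen_compl
      upper_U := hBl.compl
      subset := Set.disjoint_left.mp hd }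
  refine ⟨fun x => 1 - c.lim x, (continuous_const.sub c.continuous_lim), ?_, ?_, ?_, ?_⟩
  · intro x y hxy
    have h := c.lim_antitone hxy
    simp only; linarith
  · intro a ha
    show 1 - c.lim a = 1
    rw [c.lim_of_mem_C a ha]; norm_num
  · intro b hb
    show 1 - c.lim b = 0
    rw [c.lim_of_nmem_U b (fun h => h hb)]; norm_num
  · intro x
    show (0:ℝ) ≤ 1 - c.lim x ∧ 1 - c.lim x ≤ 1
    have h := c.lim_mem_Icc x
    constructor <;> [linarith [h.2]; linarith [h.1]]

end NachbinProof

namespace NachbinProof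

open Set Filter Topology

variable {X : Type*} [TopologicalSpace X] [CompactSpace X] [PartialOrder X]
  [OrderClosedTopology X]

/-- Approximation step: `f` can be uniformly approximated on `Y` within `1/k` by a continuous
monotone function defined on all of `X`. -/
lemma nachbin_approx {Y : Set X} (hY : IsClosed Y) {f : Y → ℝ} (hfc : Continuous f)
    (hfm : Monotone f) (hf0 : ∀ y, 0 ≤ f y) (hf1 : ∀ y, f y ≤ 1) (k : ℕ) (hk : 0 < k) :
    ∃ H : X → ℝ, Continuous H ∧ Monotone H ∧ ∀ y : Y, |H y - f y| ≤ 1 / k := by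
  have hkR : (0:ℝ) < k := by exact_mod_cast hk
  -- the closed upper / closed lower pairs
  have key : ∀ i : ℕ, ∃ g : X → ℝ, Continuous g ∧ Monotone g ∧
      (∀ a ∈ {x | ∃ a ∈ Subtype.val '' {y : Y | ((i:ℝ)+1)/k ≤ f y}, a ≤ x}, g a = 1) ∧
      (∀ b ∈ {x | ∃ a ∈ Subtype.val '' {y : Y | f y ≤ (i:ℝ)/k}, x ≤ a}, g b = 0) ∧
      ∀ x, g x ∈ Icc (0:ℝ) 1 := by
    intro i
    have hSA : IsClosed (Subtype.val '' {y : Y | ((i:ℝ)+1)/k ≤ f y}) :=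
      hY.isClosedEmbedding_subtypeVal.isClosedMap _ (isClosed_le continuous_const hfc)
    have hSB : IsClosed (Subtype.val '' {y : Y | f y ≤ (i:ℝ)/k}) :=
      hY.isClosedEmbedding_subtypeVal.isClosedMap _ (isClosed_le hfc continuous_const)
    refine urysohn_mono (nachbin_isClosed_upClosure hSA) (nachbin_isClosed_downClosure hSB)
      ?_ ?_ ?_
    · rintro a b hab ⟨c, hc, hca⟩; exact ⟨c, hc, hca.trans hab⟩
    · rintro a b hab ⟨c, hc, hca⟩; exact ⟨c, hc, hab.trans hca⟩
    · rw [Set.disjoint_left]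
      rintro x ⟨a, ⟨y₁, hy₁, rfl⟩, hax⟩ ⟨b, ⟨y₂, hy₂, rfl⟩, hxb⟩
      have h12 : y₁ ≤ y₂ := Subtype.coe_le_coe.mp (hax.trans hxb)
      have := (hfm h12).trans hy₂
      have : ((i:ℝ)+1)/k ≤ (i:ℝ)/k := le_trans hy₁ this
      rw [div_le_div_iff₀ hkR hkR] at this
      nlinarith
  choose g hgc hgm hg1 hg0 hg01 using key
  refine ⟨fun x => (1/k) * ∑ i ∈ Finset.range k, g i x, ?_, ?_, ?_⟩
  · exact continuous_const.mul (continuous_finset_sum _ fun i _ => hgc i)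
  · intro x y hxy
    have : ∀ i ∈ Finset.range k, g i x ≤ g i y := fun i _ => hgm i hxy
    have hs := Finset.sum_le_sum this
    have h1k : (0:ℝ) ≤ 1/k := by positivity
    simpa using mul_le_mul_of_nonneg_left hs h1k
  · intro y
    set c := f y with hc
    have hc0 : 0 ≤ c := hf0 y
    have hc1 : c ≤ 1 := hf1 y
    -- upper bound on the sum
    have hub : ∑ i ∈ Finset.range k, g i (y : X) ≤ c * k + 1 := by
      have h1 : ∑ i ∈ Finset.range k, g i (y : X) ≤
          ∑ i ∈ Finset.range k, (if (i:ℝ)/k < c then (1:ℝ) else 0) := by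
        refine Finset.sum_le_sum fun i _ => ?_
        by_cases h : (i:ℝ)/k < c
        · simp only [h, if_true]; exact (hg01 i (y : X)).2
        · simp only [h, if_false]
          have : g i (y : X) = 0 := hg0 i _ ⟨(y : X), ⟨y, not_lt.mp h, rfl⟩, le_rfl⟩
          simp [this]
      rw [Finset.sum_boole] at h1
      refine h1.trans ?_
      have hsub : Finset.filter (fun i : ℕ => (i:ℝ)/k < c) (Finset.range k) ⊆
          Finset.range (Nat.floor (c * k) + 1) := by
        intro i hi
        simp only [Finset.mem_filter, Finset.mem_range] at hi ⊢
        have : (i:ℝ) < c * k := by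
          rw [div_lt_iff₀ hkR] at hi; exact hi.2
        have : (i:ℕ) ≤ Nat.floor (c * k) := Nat.le_floor this.le
        omega
      have hcard := Finset.card_le_card hsub
      rw [Finset.card_range] at hcard
      have : ((Nat.floor (c * k) + 1 : ℕ) : ℝ) ≤ c * k + 1 := by
        push_cast
        have := Nat.floor_le (by positivity : (0:ℝ) ≤ c * k)
        linarith
      calc ((Finset.filter (fun i : ℕ => (i:ℝ)/k < c) (Finset.range k)).card : ℝ)
          ≤ ((Nat.floor (c * k) + 1 : ℕ) : ℝ) := by exact_mod_cast hcard
        _ ≤ c * k + 1 := this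
    -- lower bound on the sum
    have hlb : c * k - 1 ≤ ∑ i ∈ Finset.range k, g i (y : X) := by
      have h1 : ∑ i ∈ Finset.range k, (if ((i:ℝ)+1)/k ≤ c then (1:ℝ) else 0) ≤
          ∑ i ∈ Finset.range k, g i (y : X) := by
        refine Finset.sum_le_sum fun i _ => ?_
        by_cases h : ((i:ℝ)+1)/k ≤ c
        · simp only [h, if_true]
          exact (hg1 i _ ⟨(y : X), ⟨y, h, rfl⟩, le_rfl⟩).ge
        · simp only [h, if_false]; exact (hg01 i (y : X)).1
      rw [Finset.sum_boole] at h1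
      refine le_trans ?_ h1
      have hsub : Finset.range (Nat.floor (c * k)) ⊆
          Finset.filter (fun i : ℕ => ((i:ℝ)+1)/k ≤ c) (Finset.range k) := by
        intro i hi
        simp only [Finset.mem_range] at hi
        have hik : (i:ℝ) + 1 ≤ c * k := by
          have h2 : (i:ℕ) + 1 ≤ Nat.floor (c * k) := hi
          have h3 : ((i + 1 : ℕ) : ℝ) ≤ Nat.floor (c * k) := by exact_mod_cast h2
          have h4 := Nat.floor_le (by positivity : (0:ℝ) ≤ c * k)
          push_cast at h3
          linarith
        have hik2 : i < k := by
          have h5 : (i:ℝ) < (k:ℝ) := by nlinarith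
          exact_mod_cast h5
        simp only [Finset.mem_filter, Finset.mem_range]
        exact ⟨hik2, by rw [div_le_iff₀ hkR]; linarith⟩
      have hcard := Finset.card_le_card hsub
      rw [Finset.card_range] at hcard
      have hfl : c * k - 1 ≤ (Nat.floor (c * k) : ℝ) := by
        have := Nat.lt_floor_add_one (c * k)
        linarith
      calc c * k - 1 ≤ (Nat.floor (c * k) : ℝ) := hfl
        _ ≤ _ := by exact_mod_cast hcard
    rw [abs_le]
    constructor
    · have := mul_le_mul_of_nonneg_left hlb (by positivity : (0:ℝ) ≤ 1/k)
      have hck : (1/k) * (c * k - 1) = c - 1/k := by field_simp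
      rw [hck] at this
      simp only
      linarith
    · have := mul_le_mul_of_nonneg_left hub (by positivity : (0:ℝ) ≤ 1/k)
      have hck : (1/k) * (c * k + 1) = c + 1/k := by field_simp
      rw [hck] at this
      simp only
      linarith

end NachbinProof

open Set Filter Topology NachbinProof

/-- Nachbin's extension theorem: every continuous monotone `[0,1]`-valued function on a
closed subspace of a compact ordered space extends to a continuous monotone function
on the whole space. -/
theorem nachbin_extension {X : Type*} [TopologicalSpace X] [CompactSpace X]
    [PartialOrder X] [OrderClosedTopology X] {Y : Set X} (hY : IsClosed Y)
    {f : Y → unitInterval} (hfc : Continuous f) (hfm : Monotone f) :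
    ∃ F : X → unitInterval, Continuous F ∧ Monotone F ∧ ∀ z : Y, F z = f z := by
  set f' : Y → ℝ := fun y => (f y : ℝ) with hf'
  have hf'c : Continuous f' := continuous_subtype_val.comp hfc
  have hf'm : Monotone f' := fun a b h => Subtype.coe_le_coe.mpr (hfm h)
  -- uniform approximations on Y
  have happ : ∀ n : ℕ, ∃ H : X → ℝ, Continuous H ∧ Monotone H ∧
      ∀ y : Y, |H y - f' y| ≤ (1/2 : ℝ)^n := by
    intro n
    obtain ⟨H, h1, h2, h3⟩ := nachbin_approx hY hf'c hf'm (fun y => (f y).2.1)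
      (fun y => (f y).2.2) (2^n) (by positivity)
    refine ⟨H, h1, h2, fun y => (h3 y).trans ?_⟩
    have hcast : ((2^n : ℕ):ℝ) = 2^n := by push_cast; ring
    exact le_of_eq (by rw [hcast, one_div_pow])
  choose H hHc hHm hHf using happ
  -- adjusted sequence, uniformly Cauchy on X
  set G : ℕ → X → ℝ := fun n => Nat.rec (H 0)
    (fun n Gn => fun x => min (max (H (n+1) x) (Gn x - 3*(1/2:ℝ)^(n+1)))
      (Gn x + 3*(1/2:ℝ)^(n+1))) n with hG
  have hGsucc : ∀ (n : ℕ) (x : X), G (n+1) x =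
      min (max (H (n+1) x) (G n x - 3*(1/2:ℝ)^(n+1))) (G n x + 3*(1/2:ℝ)^(n+1)) :=
    fun n x => rfl
  have hGinv : ∀ n : ℕ, (Continuous (G n) ∧ Monotone (G n)) ∧
      ∀ y : Y, |G n y - f' y| ≤ (1/2:ℝ)^n := by
    intro n
    induction n with
    | zero => exact ⟨⟨hHc 0, hHm 0⟩, hHf 0⟩
    | succ n ih =>
      obtain ⟨⟨hc, hm⟩, hfb⟩ := ih
      have heq : ∀ y : Y, G (n+1) y = H (n+1) y := by
        intro y
        have h1 := hHf (n+1) y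
        have h2 := hfb y
        rw [abs_le] at h1 h2
        have hpow : (1/2:ℝ)^(n+1) + (1/2:ℝ)^n ≤ 3*(1/2:ℝ)^(n+1) := by
          rw [pow_succ]; ring_nf; nlinarith [pow_pos (by norm_num : (0:ℝ) < 1/2) n]
        have hlow : G n y - 3*(1/2:ℝ)^(n+1) ≤ H (n+1) y := by
          have := pow_nonneg (by norm_num : (0:ℝ) ≤ 1/2) n
          nlinarith [h1.1, h2.2]
        have hhigh : H (n+1) y ≤ G n y + 3*(1/2:ℝ)^(n+1) := by
          nlinarith [h1.2, h2.1]
        rw [hGsucc, max_eq_left hlow, min_eq_left hhigh]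
      refine ⟨⟨?_, ?_⟩, ?_⟩
      · have hcont : Continuous (fun x => min (max (H (n+1) x) (G n x - 3*(1/2:ℝ)^(n+1)))
            (G n x + 3*(1/2:ℝ)^(n+1))) :=
          ((hHc (n+1)).max (hc.sub continuous_const)).min (hc.add continuous_const)
        rw [show G (n+1) = _ from funext (hGsucc n)]
        exact hcont
      · intro a b hab
        rw [hGsucc, hGsucc]
        exact min_le_min (max_le_max (hHm (n+1) hab) (by linarith [hm hab]))
          (by linarith [hm hab])
      · intro y
        rw [heq y]
        exact hHf (n+1) y
  have hGdiff : ∀ (n : ℕ) (x : X), |G (n+1) x - G n x| ≤ 3*(1/2:ℝ)^(n+1) := by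
    intro n x
    rw [hGsucc, abs_le]
    have hpos : (0:ℝ) ≤ 3*(1/2:ℝ)^(n+1) := by positivity
    constructor
    · have h1 : G n x - 3*(1/2:ℝ)^(n+1) ≤ max (H (n+1) x) (G n x - 3*(1/2:ℝ)^(n+1)) :=
        le_max_right _ _
      have h2 : G n x - 3*(1/2:ℝ)^(n+1) ≤ G n x + 3*(1/2:ℝ)^(n+1) := by linarith
      have := le_min h1 h2
      linarith
    · have := min_le_right (max (H (n+1) x) (G n x - 3*(1/2:ℝ)^(n+1)))
        (G n x + 3*(1/2:ℝ)^(n+1))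
      linarith
  -- the limit function
  set d : ℕ → X → ℝ := fun n x => G (n+1) x - G n x with hd
  have hu : Summable (fun n : ℕ => 3*(1/2:ℝ)^(n+1)) := by
    have : Summable (fun n : ℕ => (1/2:ℝ)^n) :=
      summable_geometric_of_lt_one (by norm_num) (by norm_num)
    simpa [pow_succ, mul_comm, mul_assoc, mul_left_comm] using (this.mul_left (3*(1/2:ℝ)))
  have hdnorm : ∀ (n : ℕ) (x : X), ‖d n x‖ ≤ 3*(1/2:ℝ)^(n+1) := fun n x => hGdiff n x
  set F₀ : X → ℝ := fun x => G 0 x + ∑' n, d n x with hF₀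
  have hF₀c : Continuous F₀ := by
    refine (hGinv 0).1.1.add (continuous_tsum (fun n => ?_) hu (fun n x => hdnorm n x))
    exact ((hGinv (n+1)).1.1.sub (hGinv n).1.1)
  have htendsto : ∀ x : X, Tendsto (fun n => G n x) atTop (𝓝 (F₀ x)) := by
    intro x
    have hsum : Summable (fun n => d n x) :=
      Summable.of_norm_bounded hu (fun n => hdnorm n x)
    have h1 : Tendsto (fun n => ∑ i ∈ Finset.range n, d i x) atTop (𝓝 (∑' n, d n x)) :=
      hsum.hasSum.tendsto_sum_nat
    have h2 : ∀ n, ∑ i ∈ Finset.range n, d i x = G n x - G 0 x := by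
      intro n; simp only [hd]; exact Finset.sum_range_sub (fun i => G i x) n
    have h3 : Tendsto (fun n => G n x - G 0 x) atTop (𝓝 (∑' n, d n x)) := by
      rwa [funext h2] at h1
    have h4 := h3.add_const (G 0 x)
    simp only [sub_add_cancel] at h4
    convert h4 using 2
    simp [hF₀]
    ring
  have hF₀m : Monotone F₀ := by
    intro a b hab
    exact le_of_tendsto_of_tendsto' (htendsto a) (htendsto b)
      (fun n => (hGinv n).1.2 hab)
  have hF₀Y : ∀ z : Y, F₀ z = f' z := by
    intro z
    have h1 : Tendsto (fun n => G n z) atTop (𝓝 (f' z)) := by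
      rw [tendsto_iff_dist_tendsto_zero]
      refine squeeze_zero (g := fun n => (1/2:ℝ)^n) (fun n => dist_nonneg) (fun n => ?_) ?_
      · rw [Real.dist_eq]; exact (hGinv n).2 z
      · exact tendsto_pow_atTop_nhds_zero_of_lt_one (by norm_num) (by norm_num)
    exact tendsto_nhds_unique (htendsto z) h1
  -- clamp into the unit interval
  refine ⟨fun x => Set.projIcc (0:ℝ) 1 zero_le_one (F₀ x), ?_, ?_, ?_⟩
  · exact continuous_projIcc.comp hF₀c
  · exact fun a b hab => monotone_projIcc zero_le_one (hF₀m hab)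
  · intro z
    have hmem : (f z : ℝ) ∈ Icc (0:ℝ) 1 := (f z).2
    show Set.projIcc (0:ℝ) 1 zero_le_one (F₀ z) = f z
    rw [hF₀Y z]
    show Set.projIcc (0:ℝ) 1 zero_le_one (f z : ℝ) = f z
    rw [Set.projIcc_of_mem zero_le_one hmem]
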